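/- arXiv:1507.01247 — 2 statements merged into one kernel-verified Lean document; each statement's English description precedes it below -/
import Mathlib

section
/- Let R be a unital subring of ℂ closed under complex conjugation that has an essentially unique partition of the unit. Then for every natural number n ≥ 2, the complex number 1/n does not belong to R. Consequently, no subfield of ℂ that is closed under complex conjugation has an essentially unique partition of the unit. -/
open MulOpposite

noncomputable section

/-- A directed graph: vertices, edges, source and range maps. -/
structure LGraph where
  V : Type
  Ed : Type
  src : Ed → V
  rng : Ed → V

namespace Leavitt

/-- Generators of the Leavitt path algebra: vertices, edges and ghost edges. -/
inductive Gen (G : LGraph) : Type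
  | vert : G.V → Gen G
  | edge : G.Ed → Gen G
  | ghost : G.Ed → Gen G

/-- The star operation on generators: fixes vertices, swaps edges and ghost edges. -/
def starGen {G : LGraph} : Gen G → Gen G
  | .vert v => .vert v
  | .edge e => .ghost e
  | .ghost e => .edge e

@[simp] lemma starGen_vert {G : LGraph} (v : G.V) : starGen (.vert v : Gen G) = .vert v := rfl
@[simp] lemma starGen_edge {G : LGraph} (e : G.Ed) : starGen (.edge e : Gen G) = .ghost e := rfl
@[simp] lemma starGen_ghost {G : LGraph} (e : G.Ed) : starGen (.ghost e : Gen G) = .edge e := rfl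

/-- Words in the generators. -/
abbrev Wd (G : LGraph) : Type := FreeMonoid (Gen G)

/-- The star of a word: reverse it and star each letter. -/
def wordStar {G : LGraph} (w : Wd G) : Wd G :=
  FreeMonoid.ofList (((FreeMonoid.toList w).map starGen).reverse)

/-- A vertex is a sink if it emits no edge. -/
def IsSink (G : LGraph) (v : G.V) : Prop := ∀ e : G.Ed, G.src e ≠ v

/-- The free `R`-algebra on the generators, realized as a monoid algebra on words. -/
abbrev MA (R : Type) [CommRing R] (G : LGraph) : Type := MonoidAlgebra R (Wd G)

/-- The generator `g` as an element of the free algebra. -/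
def gn (R : Type) [CommRing R] {G : LGraph} (g : Gen G) : MA R G :=
  MonoidAlgebra.single (FreeMonoid.of g) (1 : R)

/-- The defining relations of the Leavitt path algebra `L_R(E)`. -/
inductive LRel (R : Type) [CommRing R] (G : LGraph) : MA R G → MA R G → Prop
  | vert_vert {v w : G.V} (h : v ≠ w) : LRel R G (gn R (.vert v) * gn R (.vert w)) 0
  | vert_idem (v : G.V) : LRel R G (gn R (.vert v) * gn R (.vert v)) (gn R (.vert v))
  | ghost_edge {e f : G.Ed} (h : e ≠ f) : LRel R G (gn R (.ghost e) * gn R (.edge f)) 0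
  | ghost_edge_self (e : G.Ed) :
      LRel R G (gn R (.ghost e) * gn R (.edge e)) (gn R (.vert (G.rng e)))
  | src_mul_edge (e : G.Ed) :
      LRel R G (gn R (.vert (G.src e)) * gn R (.edge e)) (gn R (.edge e))
  | edge_mul_rng (e : G.Ed) :
      LRel R G (gn R (.edge e) * gn R (.vert (G.rng e))) (gn R (.edge e))
  | ghost_mul_src (e : G.Ed) :
      LRel R G (gn R (.ghost e) * gn R (.vert (G.src e))) (gn R (.ghost e))
  | rng_mul_ghost (e : G.Ed) :
      LRel R G (gn R (.vert (G.rng e)) * gn R (.ghost e)) (gn R (.ghost e))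
  | ck (v : G.V) (h : {e : G.Ed | G.src e = v}.Finite)
      (hne : {e : G.Ed | G.src e = v}.Nonempty) :
      LRel R G (gn R (.vert v)) (∑ e ∈ h.toFinset, gn R (.edge e) * gn R (.ghost e))
  | unit (h : (Set.univ : Set G.V).Finite) :
      LRel R G 1 (∑ v ∈ h.toFinset, gn R (.vert v))

/-- The Leavitt path algebra of the graph `G` with coefficients in `R`. -/
abbrev LPA (R : Type) [CommRing R] (G : LGraph) : Type := RingQuot (LRel R G)

/-- The quotient map onto the Leavitt path algebra. -/
def mk (R : Type) [CommRing R] (G : LGraph) : MA R G →+* LPA R G :=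
  RingQuot.mkRingHom (LRel R G)

variable (R : Type) [CommRing R] (G : LGraph)

/-- Auxiliary monoid homomorphism sending a word to the image in the opposite algebra of
its starred word. -/
def ghostMap : Wd G →* (LPA R G)ᵐᵒᵖ :=
  FreeMonoid.lift fun x => op (mk R G (gn R (starGen x)))

/-- The underlying ring homomorphism of the (conjugate-linear, with respect to `σ`)
involution, from the free algebra to the opposite of the Leavitt path algebra. -/
def starPre (σ : R →+* R) : MA R G →+* (LPA R G)ᵐᵒᵖ :=
  MonoidAlgebra.liftNCRingHom ((algebraMap R (LPA R G)ᵐᵒᵖ).comp σ) (ghostMap R G)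
    (fun x y => Algebra.commute_algebraMap_left (σ x) _)

lemma starPre_single (σ : R →+* R) (w : Wd G) (c : R) :
    starPre R G σ (MonoidAlgebra.single w c)
      = algebraMap R (LPA R G)ᵐᵒᵖ (σ c) * ghostMap R G w := by
  classical
  exact MonoidAlgebra.liftNC_single _ _ _ _

lemma starPre_gn (σ : R →+* R) (a : Gen G) :
    starPre R G σ (gn R a) = op (mk R G (gn R (starGen a))) := by
  rw [gn, starPre_single, map_one, map_one, one_mul]
  rfl

lemma starPre_gn_mul (σ : R →+* R) (a b : Gen G) :
    starPre R G σ (gn R a * gn R b)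
      = op (mk R G (gn R (starGen b) * gn R (starGen a))) := by
  rw [map_mul, starPre_gn, starPre_gn, ← op_mul, ← map_mul]

lemma starPre_rel (σ : R →+* R) :
    ∀ ⦃a b : MA R G⦄, LRel R G a b → starPre R G σ a = starPre R G σ b := by
  have key : ∀ {x y : MA R G}, LRel R G x y → mk R G x = mk R G y :=
    fun h => RingQuot.mkRingHom_rel h
  intro a b h
  cases h with
  | vert_vert h =>
      rw [starPre_gn_mul, map_zero, starGen_vert, starGen_vert,
        key (LRel.vert_vert (Ne.symm h)), map_zero, op_zero]
  | vert_idem v =>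
      rw [starPre_gn_mul, starPre_gn, starGen_vert, key (LRel.vert_idem v)]
  | ghost_edge h =>
      rw [starPre_gn_mul, map_zero, starGen_edge, starGen_ghost,
        key (LRel.ghost_edge (Ne.symm h)), map_zero, op_zero]
  | ghost_edge_self e =>
      rw [starPre_gn_mul, starPre_gn, starGen_edge, starGen_ghost, starGen_vert,
        key (LRel.ghost_edge_self e)]
  | src_mul_edge e =>
      rw [starPre_gn_mul, starPre_gn, starGen_edge, starGen_vert,
        key (LRel.ghost_mul_src e)]
  | edge_mul_rng e =>
      rw [starPre_gn_mul, starPre_gn, starGen_edge, starGen_vert,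
        key (LRel.rng_mul_ghost e)]
  | ghost_mul_src e =>
      rw [starPre_gn_mul, starPre_gn, starGen_ghost, starGen_vert,
        key (LRel.src_mul_edge e)]
  | rng_mul_ghost e =>
      rw [starPre_gn_mul, starPre_gn, starGen_ghost, starGen_vert,
        key (LRel.edge_mul_rng e)]
  | ck v hfin hne =>
      rw [starPre_gn, starGen_vert, map_sum]
      simp only [starPre_gn_mul, starGen_edge, starGen_ghost]
      rw [← Finset.op_sum, ← map_sum, key (LRel.ck v hfin hne)]
  | unit hfin =>
      rw [map_one, map_sum]
      simp only [starPre_gn, starGen_vert]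
      rw [← Finset.op_sum, ← map_sum, ← key (LRel.unit hfin), map_one, op_one]

/-- The involution `x ↦ x*` on the Leavitt path algebra, conjugate-linear with respect
to the coefficient conjugation `σ`. -/
def lstar (σ : R →+* R) : LPA R G → LPA R G :=
  fun x => unop ((RingQuot.lift ⟨starPre R G σ, starPre_rel R G σ⟩) x)

/-- `chainOK G v l` : the list of edges `l` is a path starting at the vertex `v`. -/
def chainOK (G : LGraph) : G.V → List G.Ed → Prop
  | _, [] => True
  | v, e :: l => G.src e = v ∧ chainOK G (G.rng e) l

/-- The end vertex of a list of edges starting at `v`. -/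
def pathEnd (G : LGraph) : G.V → List G.Ed → G.V
  | v, [] => v
  | _, e :: l => pathEnd G (G.rng e) l

/-- A finite path in `G`: a starting vertex together with a compatible (possibly empty)
list of edges.  Vertices are the paths of length `0`. -/
structure GPath (G : LGraph) where
  first : G.V
  edges : List G.Ed
  ok : chainOK G first edges

/-- The range (end vertex) of a path. -/
def GPath.last {G : LGraph} (p : GPath G) : G.V := pathEnd G p.first p.edges

/-- The length of a path. -/
def GPath.length {G : LGraph} (p : GPath G) : ℕ := p.edges.length

/-- The word in the generators associated to a path. -/
def GPath.word {G : LGraph} (p : GPath G) : Wd G :=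
  FreeMonoid.ofList (Gen.vert p.first :: p.edges.map Gen.edge)

/-- The element `α` of `L_R(E)` associated to a path `α`. -/
def pathElem {G : LGraph} (p : GPath G) : LPA R G :=
  mk R G (MonoidAlgebra.single p.word (1 : R))

/-- The element `α*` of `L_R(E)` associated to a path `α`. -/
def pathElemStar {G : LGraph} (p : GPath G) : LPA R G :=
  mk R G (MonoidAlgebra.single (wordStar p.word) (1 : R))

/-- The diagonal subalgebra: the `R`-linear span of the `αα*` for finite paths `α`. -/
def diagonal : Submodule R (LPA R G) :=
  Submodule.span R (Set.range fun p : GPath G => pathElem R p * pathElemStar R p)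

/-- The image of a vertex in the Leavitt path algebra. -/
def vertexElem (v : G.V) : LPA R G := mk R G (gn R (.vert v))

/-- The image of an edge in the Leavitt path algebra. -/
def edgeElem (e : G.Ed) : LPA R G := mk R G (gn R (.edge e))

/-- The image of a ghost edge (`e*`) in the Leavitt path algebra. -/
def ghostElem (e : G.Ed) : LPA R G := mk R G (gn R (.ghost e))

/-- A projection: a self-adjoint idempotent. -/
def IsProjection (σ : R →+* R) (p : LPA R G) : Prop :=
  p * p = p ∧ lstar R G σ p = p

/-- A unitary element. -/
def IsUnitary (σ : R →+* R) (u : LPA R G) : Prop :=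
  lstar R G σ u * u = 1 ∧ u * lstar R G σ u = 1

/-- The adjacency matrix of a graph. -/
noncomputable def adjMatrix (G : LGraph) : Matrix G.V G.V ℤ :=
  Matrix.of fun v w => (Nat.card {e : G.Ed // G.src e = v ∧ G.rng e = w} : ℤ)

/-- A graph is strongly connected if there is a path between any two vertices. -/
def StronglyConnected (G : LGraph) : Prop :=
  ∀ u w : G.V, ∃ p : GPath G, p.first = u ∧ p.last = w

/-- A graph is essential if it has no sinks and no sources. -/
def Essential (G : LGraph) : Prop :=
  (∀ v : G.V, ∃ e : G.Ed, G.src e = v) ∧ (∀ v : G.V, ∃ e : G.Ed, G.rng e = v)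

/-- Condition (L): every cycle has an exit. -/
def ConditionL (G : LGraph) : Prop :=
  ∀ p : GPath G, p.edges ≠ [] → p.last = p.first →
    ∃ (i : Fin p.edges.length) (f : G.Ed),
      G.src f = G.src (p.edges.get i) ∧ f ≠ p.edges.get i

/-- Complex conjugation on a subring of `ℂ` closed under conjugation. -/
def conjHom (R : Subring ℂ) (hR : ∀ z ∈ R, (starRingEnd ℂ) z ∈ R) : ↥R →+* ↥R where
  toFun z := ⟨(starRingEnd ℂ) (z : ℂ), hR (z : ℂ) z.2⟩
  map_one' := by ext; simp
  map_mul' x y := by ext; simp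
  map_zero' := by ext; simp
  map_add' x y := by ext; simp

/-- A subring of `ℂ` has an essentially unique partition of the unit if whenever
`∑ λᵢ λ̄ᵢ = 1` with all `λᵢ` in the subring, all but one of the `λᵢ` vanish. -/
def HasEUP (R : Subring ℂ) : Prop :=
  ∀ (n : ℕ) (lam : Fin n → ↥R),
    (∑ i, (lam i : ℂ) * (starRingEnd ℂ) (lam i : ℂ)) = 1 →
      ∃ j : Fin n, ∀ i : Fin n, i ≠ j → lam i = 0

/-- The graph `E₂`: one vertex and two loops (`false` ↦ `a`, `true` ↦ `b`). -/
def E2 : LGraph := ⟨PUnit, Bool, fun _ => PUnit.unit, fun _ => PUnit.unit⟩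

/-- The graph `E₂₋`, the Cuntz splice of `E₂`.  Vertices: `0 = u`, `1 = v₁`, `2 = v₂`.
Edges: `0,1 = f₁,f₂` (loops at `u`), `2 = d₁ : u → v₁`, `3 = d₂ : v₁ → u`,
`4 = e₁` (loop at `v₁`), `5 = e₂ : v₁ → v₂`, `6 = e₃ : v₂ → v₁`, `7 = e₄` (loop at `v₂`). -/
def E2m : LGraph := ⟨Fin 3, Fin 8, ![0, 0, 0, 1, 1, 1, 2, 2], ![0, 0, 1, 0, 1, 2, 1, 2]⟩

end Leavitt

end

open Leavitt in
lemma aux_inv_nat_not_mem (R : Subring ℂ) (hEUP : HasEUP R) (n : ℕ) (hn : 2 ≤ n) :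
    ((n : ℂ))⁻¹ ∉ R := by
  intro hmem
  have hn0 : (n : ℂ) ≠ 0 := Nat.cast_ne_zero.mpr (by omega)
  set x : ↥R := ⟨((n : ℂ))⁻¹, hmem⟩ with hx
  have hconj : (starRingEnd ℂ) ((n : ℂ))⁻¹ = ((n : ℂ))⁻¹ := by
    simp
  have hsum : (∑ _i : Fin (n * n), ((fun _ => x : Fin (n*n) → ↥R) _i : ℂ)
      * (starRingEnd ℂ) ((fun _ => x : Fin (n*n) → ↥R) _i : ℂ)) = 1 := by
    simp only [hx, hconj, Finset.sum_const, Finset.card_univ, Fintype.card_fin, nsmul_eq_mul]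
    push_cast
    field_simp
  obtain ⟨j, hj⟩ := hEUP (n * n) (fun _ => x) hsum
  have h4 : 2 ≤ n * n := le_trans hn (Nat.le_mul_of_pos_left n (by omega))
  have : Nontrivial (Fin (n * n)) := Fin.nontrivial_iff_two_le.mpr h4
  obtain ⟨i, hi⟩ := exists_ne j
  have := hj i hi
  have : ((n : ℂ))⁻¹ = 0 := by
    have := congrArg (Subtype.val) this
    simpa [hx] using this
  exact hn0 (inv_eq_zero.mp this)

open Leavitt in
/-- If `R ⊆ ℂ` is closed under conjugation and has an essentially
unique partition of the unit, then `1/n ∉ R` for every `n ≥ 2`; consequently no subfield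
of `ℂ` closed under conjugation has an essentially unique partition of the unit. -/
theorem inv_nat_not_mem_and_no_subfield_hasEUP
    (R : Subring ℂ) (hR : ∀ z ∈ R, (starRingEnd ℂ) z ∈ R) (hEUP : HasEUP R) :
    (∀ n : ℕ, 2 ≤ n → ((n : ℂ))⁻¹ ∉ R) ∧
    (∀ K : Subfield ℂ, (∀ z ∈ K, (starRingEnd ℂ) z ∈ K) → ¬ HasEUP K.toSubring) := by
  refine ⟨fun n hn => aux_inv_nat_not_mem R hEUP n hn, fun K hK hE => ?_⟩
  exact aux_inv_nat_not_mem K.toSubring hE 2 le_rfl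
    (K.inv_mem (by exact_mod_cast natCast_mem K 2))
end

section
/- In the Leavitt path algebra L_ℂ(E₂) with generators the two loops a, b (and the single vertex giving the unit 1), the element p = (1/2)(aa* + ab* + ba* + bb*) is a projection (p = p² = p*) that does not belong to the diagonal D(L_ℂ(E₂)), i.e. p is not in the ℂ-linear span of {αα* : α ∈ E₂*}. -/
open MulOpposite

noncomputable section Aux
open Leavitt Finsupp

namespace NdAux

/-- numeric value of a bit -/
def bt (e : Bool) : ℕ := cond e 1 0

/-- shift operator for edge `e` : `single n ↦ single (2n + bt e)` -/
def S (e : Bool) : Module.End ℂ (ℕ →₀ ℂ) :=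
  Finsupp.lmapDomain ℂ ℂ (fun n => 2 * n + bt e)

/-- adjoint shift: strips the last bit when it matches. -/
def T (e : Bool) : Module.End ℂ (ℕ →₀ ℂ) :=
  Finsupp.lsum ℂ (fun n => if n % 2 = bt e then Finsupp.lsingle (n / 2) else 0)

@[simp] lemma S_single (e : Bool) (n : ℕ) (c : ℂ) :
    S e (Finsupp.single n c) = Finsupp.single (2 * n + bt e) c := by
  simp [S, Finsupp.lmapDomain_apply, Finsupp.mapDomain_single]

@[simp] lemma T_single (e : Bool) (n : ℕ) (c : ℂ) :
    T e (Finsupp.single n c) = if n % 2 = bt e then Finsupp.single (n / 2) c else 0 := by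
  simp only [T, Finsupp.lsum_single]
  split_ifs with h <;> simp

lemma TS (e f : Bool) : T e * S f = if e = f then (1 : Module.End ℂ (ℕ →₀ ℂ)) else 0 := by
  apply Finsupp.lhom_ext
  intro n c
  have h1 : (2 * n + bt f) % 2 = bt f := by cases f <;> simp [bt] <;> omega
  have h2 : (2 * n + bt f) / 2 = n := by cases f <;> simp [bt] <;> omega
  rw [Module.End.mul_apply, S_single, T_single, h1, h2]
  cases e <;> cases f <;> simp [bt]

lemma sumST : S false * T false + S true * T true = (1 : Module.End ℂ (ℕ →₀ ℂ)) := by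
  apply Finsupp.lhom_ext
  intro n c
  rcases Nat.mod_two_eq_zero_or_one n with h | h <;>
    · simp [Module.End.mul_apply, bt, h]
      congr 1
      omega

/-- images of the generators -/
def genIm : Gen E2 → Module.End ℂ (ℕ →₀ ℂ)
  | .vert _ => 1
  | .edge e => S e
  | .ghost e => T e

/-- the algebra map out of the free algebra -/
def Φ : MA ℂ E2 →ₐ[ℂ] Module.End ℂ (ℕ →₀ ℂ) :=
  MonoidAlgebra.lift ℂ _ (Wd E2) (FreeMonoid.lift genIm)

lemma Φ_gn (g : Gen E2) : Φ (gn ℂ g) = genIm g := by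
  simp [Φ, gn, MonoidAlgebra.lift_single]

lemma Φ_rel : ∀ ⦃x y : MA ℂ E2⦄, LRel ℂ E2 x y → Φ x = Φ y := by
  intro x y h
  cases h with
  | vert_vert h => exact absurd (by cases ‹E2.V›; cases ‹E2.V›; rfl) h
  | vert_idem v => rw [map_mul, Φ_gn]; simp [genIm]
  | ghost_edge h =>
      rw [map_mul, Φ_gn, Φ_gn, map_zero]
      show T _ * S _ = 0
      exact (TS _ _).trans (if_neg h)
  | ghost_edge_self e =>
      rw [map_mul, Φ_gn, Φ_gn, Φ_gn]
      show T e * S e = genIm (.vert _)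
      exact (TS e e).trans (if_pos rfl)
  | src_mul_edge e => rw [map_mul, Φ_gn, Φ_gn]; show 1 * S e = S e; simp
  | edge_mul_rng e => rw [map_mul, Φ_gn, Φ_gn]; show S e * 1 = S e; simp
  | ghost_mul_src e => rw [map_mul, Φ_gn, Φ_gn]; show T e * 1 = T e; simp
  | rng_mul_ghost e => rw [map_mul, Φ_gn, Φ_gn]; show 1 * T e = T e; simp
  | ck v hfin hne =>
      cases v
      have htf : hfin.toFinset = (Finset.univ : Finset Bool) := by
        apply Finset.ext; intro e
        simp only [Set.Finite.mem_toFinset, Set.mem_setOf_eq, Finset.mem_univ, iff_true]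
        exact ⟨fun _ => Finset.mem_univ (α := Bool) e, fun _ => rfl⟩
      rw [Φ_gn, map_sum, htf]
      simp only [map_mul, Φ_gn]
      show genIm (.vert PUnit.unit) = ∑ e : Bool, S e * T e
      rw [Fintype.sum_bool]
      show (1 : Module.End ℂ (ℕ →₀ ℂ)) = S true * T true + S false * T false
      rw [← sumST]; abel
  | unit hfin =>
      rw [map_one, map_sum]
      simp only [Φ_gn]
      show (1 : Module.End ℂ (ℕ →₀ ℂ)) = ∑ _v ∈ hfin.toFinset, 1
      have : hfin.toFinset = (@singleton E2.V (Finset E2.V) _ (E2.src false)) := by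
        exact Finset.ext fun v => by
          simp only [Set.Finite.mem_toFinset, Set.mem_univ, true_iff]; exact Finset.mem_singleton.mpr rfl
      rw [this, Finset.sum_singleton]

/-- the representation of the Leavitt path algebra -/
def φ : LPA ℂ E2 →ₐ[ℂ] Module.End ℂ (ℕ →₀ ℂ) :=
  RingQuot.liftAlgHom ℂ ⟨Φ, Φ_rel⟩

lemma φ_mk (x : MA ℂ E2) : φ (mk ℂ E2 x) = Φ x := by
  have h2 : mk ℂ E2 x = RingQuot.mkAlgHom ℂ (LRel ℂ E2) x := by
    show RingQuot.mkRingHom (LRel ℂ E2) x = _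
    rw [← RingQuot.mkAlgHom_coe ℂ (LRel ℂ E2)]; rfl
  rw [h2]
  exact RingQuot.liftAlgHom_mkAlgHom_apply ℂ Φ Φ_rel x

@[simp] lemma φ_edge (e : Bool) : φ (edgeElem ℂ E2 e) = S e := by
  exact (φ_mk (gn ℂ (.edge e))).trans (Φ_gn (.edge e))

@[simp] lemma φ_ghost (e : Bool) : φ (ghostElem ℂ E2 e) = T e := by
  exact (φ_mk (gn ℂ (.ghost e))).trans (Φ_gn (.ghost e))

lemma keyP : ∀ (l : List Bool) (n : ℕ), ∃ c : ℂ,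
    (((l.map S).prod * ((l.map T).reverse).prod) (Finsupp.single n 1))
      = c • Finsupp.single n (1 : ℂ) := by
  intro l
  induction l with
  | nil => intro n; exact ⟨1, by simp⟩
  | cons e l ih =>
      intro n
      have hexp : ((e :: l).map S).prod * (((e :: l).map T).reverse).prod
          = S e * ((l.map S).prod * ((l.map T).reverse).prod) * T e := by
        simp [List.prod_append, mul_assoc]
      rcases eq_or_ne (n % 2) (bt e) with h | h
      · obtain ⟨c, hc⟩ := ih (n / 2)
        refine ⟨c, ?_⟩
        have hn : 2 * (n / 2) + bt e = n := by rw [← h]; omega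
        rw [hexp, Module.End.mul_apply, Module.End.mul_apply, T_single, if_pos h, hc,
          map_smul, S_single, hn]
      · refine ⟨0, ?_⟩
        rw [hexp, Module.End.mul_apply, Module.End.mul_apply, T_single, if_neg h]
        simp

/-- evaluation functional -/
def ψ : LPA ℂ E2 →ₗ[ℂ] ℂ :=
  (Finsupp.lapply 1) ∘ₗ (LinearMap.applyₗ (Finsupp.single 0 (1 : ℂ)) :
      Module.End ℂ (ℕ →₀ ℂ) →ₗ[ℂ] (ℕ →₀ ℂ)) ∘ₗ φ.toLinearMap

lemma ψ_apply (x : LPA ℂ E2) : ψ x = ((φ x) (Finsupp.single 0 1)) 1 := rfl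

lemma ψ_diag (q : GPath E2) : ψ (pathElem ℂ q * pathElemStar ℂ q) = 0 := by
  rw [ψ_apply, map_mul]
  have h1 : φ (pathElem ℂ q) = (q.edges.map S).prod := by
    rw [pathElem, φ_mk]
    have : Φ (MonoidAlgebra.single q.word 1)
        = FreeMonoid.lift genIm q.word := by
      simp [Φ, MonoidAlgebra.lift_single]
    rw [this, GPath.word, FreeMonoid.lift_ofList]
    simp [genIm, List.map_map, Function.comp_def]; rfl
  have h2 : φ (pathElemStar ℂ q) = ((q.edges.map T).reverse).prod := by
    rw [pathElemStar, φ_mk]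
    have : Φ (MonoidAlgebra.single (wordStar q.word) 1)
        = FreeMonoid.lift genIm (wordStar q.word) := by
      simp [Φ, MonoidAlgebra.lift_single]
    rw [this, wordStar, GPath.word, FreeMonoid.lift_ofList]
    simp [genIm, List.map_map, Function.comp_def, List.map_reverse]; rfl
  rw [h1, h2]
  obtain ⟨c, hc⟩ := keyP q.edges 0
  rw [Module.End.mul_apply] at hc ⊢
  rw [hc]
  simp [Finsupp.single_apply]


instance : Fintype E2.V := ⟨@singleton E2.V (Finset E2.V) _ PUnit.unit, fun _ => Finset.mem_singleton.mpr rfl⟩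

lemma vert_one : mk ℂ E2 (gn ℂ (.vert PUnit.unit)) = 1 := by
  have h := RingQuot.mkRingHom_rel
    (LRel.unit (R := ℂ) (G := E2) (Set.finite_univ (α := E2.V)))
  have htf : (Set.finite_univ (α := E2.V)).toFinset = (@singleton E2.V (Finset E2.V) _ (E2.src false)) := by
    exact Finset.ext fun v => by
      simp only [Set.Finite.mem_toFinset, Set.mem_univ, true_iff]; exact Finset.mem_singleton.mpr rfl
  rw [htf, Finset.sum_singleton, map_one] at h
  exact h.symm

lemma BA (e f : Bool) :
    ghostElem ℂ E2 e * edgeElem ℂ E2 f = if e = f then 1 else 0 := by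
  rcases eq_or_ne e f with rfl | h
  · have h := RingQuot.mkRingHom_rel (LRel.ghost_edge_self (R := ℂ) (G := E2) e)
    rw [map_mul] at h
    rw [if_pos rfl]
    calc ghostElem ℂ E2 e * edgeElem ℂ E2 e
        = mk ℂ E2 (gn ℂ (.vert (E2.rng e))) := h
      _ = 1 := vert_one
  · have hr := RingQuot.mkRingHom_rel (LRel.ghost_edge (R := ℂ) (G := E2) h)
    rw [map_mul, map_zero] at hr
    rw [if_neg h]; exact hr

lemma lstar_mk (x : MA ℂ E2) :
    lstar ℂ E2 (starRingEnd ℂ) (mk ℂ E2 x)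
      = unop (starPre ℂ E2 (starRingEnd ℂ) x) := by
  show unop ((RingQuot.lift ⟨starPre ℂ E2 (starRingEnd ℂ), starPre_rel ℂ E2 _⟩)
      (RingQuot.mkRingHom (LRel ℂ E2) x)) = _
  rw [RingQuot.lift_mkRingHom_apply]

lemma lstar_AB (x y : Bool) :
    lstar ℂ E2 (starRingEnd ℂ) (edgeElem ℂ E2 x * ghostElem ℂ E2 y)
      = edgeElem ℂ E2 y * ghostElem ℂ E2 x := by
  have h1 : edgeElem ℂ E2 x * ghostElem ℂ E2 y
      = mk ℂ E2 (gn ℂ (.edge x) * gn ℂ (.ghost y)) := (map_mul _ _ _).symm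
  rw [h1, lstar_mk, starPre_gn_mul, unop_op, map_mul]
  rfl

lemma lstar_add (x y : LPA ℂ E2) :
    lstar ℂ E2 (starRingEnd ℂ) (x + y)
      = lstar ℂ E2 (starRingEnd ℂ) x + lstar ℂ E2 (starRingEnd ℂ) y := by
  have hd : ∀ z : LPA ℂ E2, lstar ℂ E2 (starRingEnd ℂ) z
      = unop ((RingQuot.lift ⟨starPre ℂ E2 (starRingEnd ℂ),
          starPre_rel ℂ E2 (starRingEnd ℂ)⟩) z) := fun z => rfl
  rw [hd, hd, hd, map_add, unop_add]


end NdAux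
end Aux

open Leavitt NdAux in
/-- In `L_ℂ(E₂)` the element `p = ½(aa* + ab* + ba* + bb*)` is a
projection that does not belong to the diagonal. -/
theorem nondiagonal_projection_in_L2C :
    ∀ p : LPA ℂ E2,
      p = (2⁻¹ : ℂ) • (edgeElem ℂ E2 false * ghostElem ℂ E2 false
            + edgeElem ℂ E2 false * ghostElem ℂ E2 true
            + edgeElem ℂ E2 true * ghostElem ℂ E2 false
            + edgeElem ℂ E2 true * ghostElem ℂ E2 true) →
      p * p = p ∧ lstar ℂ E2 (starRingEnd ℂ) p = p ∧ p ∉ diagonal ℂ E2 := by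
  intro p hp
  set q : LPA ℂ E2 := edgeElem ℂ E2 false * ghostElem ℂ E2 false
      + edgeElem ℂ E2 false * ghostElem ℂ E2 true
      + edgeElem ℂ E2 true * ghostElem ℂ E2 false
      + edgeElem ℂ E2 true * ghostElem ℂ E2 true with hq
  have key : ∀ x y z w : Bool,
      (edgeElem ℂ E2 x * ghostElem ℂ E2 y) * (edgeElem ℂ E2 z * ghostElem ℂ E2 w)
        = if y = z then edgeElem ℂ E2 x * ghostElem ℂ E2 w else 0 := by
    intro x y z w
    rw [mul_assoc, ← mul_assoc (ghostElem ℂ E2 y), BA]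
    split_ifs with h
    · rw [one_mul]
    · rw [zero_mul, mul_zero]
  have hq2 : q * q = q + q := by
    rw [hq]
    simp only [mul_add, add_mul, key]
    norm_num
    abel
  have hpp : p * p = p := by
    rw [hp]
    calc ((2⁻¹ : ℂ) • q) * ((2⁻¹ : ℂ) • q) = ((2⁻¹ * 2⁻¹ : ℂ)) • (q * q) := by
          rw [smul_mul_assoc, mul_smul_comm, smul_smul]
      _ = ((4⁻¹ : ℂ)) • (q + q) := by rw [hq2]; norm_num
      _ = (2⁻¹ : ℂ) • q := by rw [smul_add, ← add_smul]; norm_num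
  refine ⟨hpp, ?_, ?_⟩
  · have hsq : lstar ℂ E2 (starRingEnd ℂ) q = q := by
      rw [hq, lstar_add, lstar_add, lstar_add, lstar_AB, lstar_AB, lstar_AB, lstar_AB]
      abel
    have hppq : p + p = q := by
      rw [hp, ← add_smul]; norm_num
    have h2 : (2 : ℂ) • lstar ℂ E2 (starRingEnd ℂ) p = (2 : ℂ) • p := by
      rw [two_smul, two_smul, ← lstar_add, hppq, hsq]
    exact smul_right_injective (LPA ℂ E2) (by norm_num : (2 : ℂ) ≠ 0) h2
  · intro hmem
    have hle : diagonal ℂ E2 ≤ LinearMap.ker ψ := by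
      rw [diagonal, Submodule.span_le]
      rintro _ ⟨gp, rfl⟩
      simp [LinearMap.mem_ker, ψ_diag]
    have h0 : ψ p = 0 := hle hmem
    have hval : ψ p = 2⁻¹ := by
      rw [hp, map_smul, smul_eq_mul, ψ_apply]
      simp only [hq, map_add, map_mul, φ_edge, φ_ghost, LinearMap.add_apply,
        Module.End.mul_apply]
      simp [T_single, S_single, bt, Finsupp.single_apply]
    rw [hval] at h0
    norm_num at h0
end
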